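/- arXiv:2106.15351 — 3 statements merged into one kernel-verified Lean document; each statement's English description precedes it below -/
import Mathlib

section
/- Let G be a string over the four-letter alphabet Fin 4 and suppose α is a hapax of G, i.e. mult_G(α) = 1. Then there exist at least three distinct strings of length |α| + 1 over Fin 4 that do not occur in G. In particular, the minimal forbidden length of G is at most the minimal hapax length of G plus 1. -/
/-- The multiplicity of `α` in `G`: the number of positions `i` such that the
contiguous substring of `G` of length `|α|` starting at `i` equals `α`. -/
def mult {A : Type*} [DecidableEq A] (G α : List A) : ℕ :=
  ((Finset.range (G.length + 1)).filter
    (fun i => i + α.length ≤ G.length ∧ (G.drop i).take α.length = α)).card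

/-- If `α` is a hapax of `G` over the four-letter alphabet, then there are at
least three distinct strings of length `|α| + 1` that do not occur in `G`;
in particular the minimal forbidden length of `G` is at most `|α| + 1`
(hence at most the minimal hapax length plus one). -/
theorem hapax_gives_three_forbidden (G α : List (Fin 4))
    (hhapax : mult G α = 1) :
    (∃ β₁ β₂ β₃ : List (Fin 4),
        β₁ ≠ β₂ ∧ β₁ ≠ β₃ ∧ β₂ ≠ β₃ ∧
        β₁.length = α.length + 1 ∧ β₂.length = α.length + 1 ∧
        β₃.length = α.length + 1 ∧
        mult G β₁ = 0 ∧ mult G β₂ = 0 ∧ mult G β₃ = 0) ∧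
      sInf {k : ℕ | ∃ β : List (Fin 4), β.length = k ∧ mult G β = 0} ≤
        α.length + 1 := by
  -- From `mult G (α ++ [a]) ≠ 0` extract an occurrence with its last letter.
  have hocc : ∀ a : Fin 4, mult G (α ++ [a]) ≠ 0 →
      ∃ i, i + α.length ≤ G.length ∧ (G.drop i).take α.length = α ∧
        (G.drop i)[α.length]? = some a := by
    intro a h
    obtain ⟨i, hi⟩ := Finset.card_pos.mp (Nat.pos_of_ne_zero h)
    rw [Finset.mem_filter] at hi
    obtain ⟨-, hle, heq⟩ := hi
    simp only [List.length_append, List.length_singleton] at hle heq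
    rw [List.take_succ] at heq
    have hlen : ((G.drop i).take α.length).length = α.length := by
      rw [List.length_take, List.length_drop]
      omega
    have h1 : (G.drop i).take α.length = α :=
      List.append_inj_left heq (by rw [hlen])
    refine ⟨i, by omega, h1, ?_⟩
    have h2 : ((G.drop i)[α.length]?).toList = [a] :=
      List.append_inj_right heq (by rw [hlen])
    cases hx : (G.drop i)[α.length]? with
    | none => rw [hx] at h2; simp at h2
    | some b => rw [hx] at h2; simp at h2; rw [h2]
  -- at most one letter `a` can extend α inside G
  have huniq : ∀ a ∈ Finset.univ.filter (fun a : Fin 4 => mult G (α ++ [a]) ≠ 0),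
      ∀ b ∈ Finset.univ.filter (fun a : Fin 4 => mult G (α ++ [a]) ≠ 0), a = b := by
    intro a ha b hb
    rw [Finset.mem_filter] at ha hb
    obtain ⟨i, hi1, hi2, hi3⟩ := hocc a ha.2
    obtain ⟨j, hj1, hj2, hj3⟩ := hocc b hb.2
    have hij : i = j := by
      have hcard : ((Finset.range (G.length + 1)).filter
          (fun i => i + α.length ≤ G.length ∧ (G.drop i).take α.length = α)).card ≤ 1 := by
        exact hhapax.le
      have := Finset.card_le_one.mp hcard i ?_ j ?_
      · exact this
      · exact Finset.mem_filter.mpr ⟨Finset.mem_range.mpr (by omega), hi1, hi2⟩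
      · exact Finset.mem_filter.mpr ⟨Finset.mem_range.mpr (by omega), hj1, hj2⟩
    rw [hij, hj3] at hi3
    exact (Option.some.inj hi3).symm
  have hs : (Finset.univ.filter (fun a : Fin 4 => mult G (α ++ [a]) ≠ 0)).card ≤ 1 :=
    Finset.card_le_one.mpr huniq
  have htot := Finset.card_filter_add_card_filter_not
    (s := (Finset.univ : Finset (Fin 4))) (fun a : Fin 4 => mult G (α ++ [a]) ≠ 0)
  have hcard4 : (Finset.univ : Finset (Fin 4)).card = 4 := by simp
  have ht : 2 < (Finset.univ.filter (fun a : Fin 4 => ¬ mult G (α ++ [a]) ≠ 0)).card := by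
    omega
  obtain ⟨a, b, c, ha, hb, hc, hab, hac, hbc⟩ := Finset.two_lt_card_iff.mp ht
  rw [Finset.mem_filter, not_ne_iff] at ha hb hc
  refine ⟨⟨α ++ [a], α ++ [b], α ++ [c],
      fun h => hab (by simpa using h), fun h => hac (by simpa using h),
      fun h => hbc (by simpa using h),
      by simp, by simp, by simp, ha.2, hb.2, hc.2⟩, ?_⟩
  exact Nat.sInf_le ⟨α ++ [a], by simp, ha.2⟩
end

section
/- Let G be a string over the four-letter alphabet Fin 4 and let k ≥ 1 be such that every string of length k over Fin 4 occurs in G. Then every string α over Fin 4 with |α| < k that occurs in G satisfies mult_G(α) ≥ 4; in particular every occurring string shorter than the maximal complete length is a repeat of G. -/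
/-- If every string of length `k ≥ 1` over the four-letter alphabet occurs in
`G`, then every occurring string strictly shorter than `k` has multiplicity at
least 4; in particular every occurring string shorter than the maximal
complete length is a repeat. -/
theorem short_strings_are_repeats (G : List (Fin 4)) (k : ℕ) (hk : 1 ≤ k)
    (hcomplete : ∀ α : List (Fin 4), α.length = k → 1 ≤ mult G α) :
    ∀ α : List (Fin 4), α.length < k → 1 ≤ mult G α → 4 ≤ mult G α := by
  obtain ⟨m, rfl⟩ : ∃ m, k = m + 1 := ⟨k - 1, by omega⟩
  intro α hlen _
  have hαm : α.length ≤ m := by omega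
  set pad := List.replicate (m - α.length) (0 : Fin 4) with hpad
  have key : ∀ c : Fin 4, ∃ i,
      (i + 1 ∈ (Finset.range (G.length + 1)).filter
        (fun i => i + α.length ≤ G.length ∧ (G.drop i).take α.length = α)) ∧
      (G.drop i).head? = some c := by
    intro c
    have hβlen : (c :: (α ++ pad)).length = m + 1 := by
      simp [hpad]; omega
    have h1 := hcomplete (c :: (α ++ pad)) hβlen
    rw [mult] at h1
    obtain ⟨i, hi⟩ := Finset.card_pos.mp h1
    simp only [Finset.mem_filter, Finset.mem_range] at hi
    obtain ⟨hir, hile, htake⟩ := hi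
    rw [hβlen] at hile htake
    cases hl : G.drop i with
    | nil => rw [hl] at htake; simp at htake
    | cons a t =>
      rw [hl, List.take_succ_cons] at htake
      obtain ⟨rfl, htail⟩ : a = c ∧ t.take m = α ++ pad := by
        exact ⟨(List.cons.injEq _ _ _ _ ▸ htake).1, (List.cons.injEq _ _ _ _ ▸ htake).2⟩
      refine ⟨i, ?_, by rw [hl]; rfl⟩
      have hdrop : G.drop (i + 1) = t := by
        have : (G.drop i).drop 1 = G.drop (i + 1) := List.drop_drop
        rw [hl] at this
        exact this.symm
      simp only [Finset.mem_filter, Finset.mem_range]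
      refine ⟨by omega, by omega, ?_⟩
      rw [hdrop]
      have : t.take α.length = (t.take m).take α.length := by
        rw [List.take_take, Nat.min_eq_left hαm]
      rw [this, htail, List.take_left]
  choose f hf hh using key
  rw [mult]
  have hinj : Set.InjOn (fun c => f c + 1) ↑(Finset.univ : Finset (Fin 4)) := by
    intro c _ c' _ h
    simp only at h
    have hfe : f c = f c' := by omega
    have := (hh c).symm.trans (hfe ▸ hh c')
    exact Option.some_injective _ this
  have := Finset.card_le_card_of_injOn (fun c => f c + 1) (fun c _ => hf c) hinj
  simpa using this
end

section
/- Let G be a string over a finite alphabet and let k ≥ 2 with k ≤ |G|. Suppose every string of length k − 1 occurring in G is a hapax of G (in particular this holds whenever k ≥ mrl(G) + 2, where mrl(G) is the maximal repeat length). Then G is k-univocal: every string G' over the same alphabet having the same k-spectrum as G (i.e. mult_{G'}(α) = mult_G(α) for all strings α of length k) is equal to G. -/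
namespace KUnivAux

variable {A : Type*} [DecidableEq A]

/-- The substring of `G` of length `m` starting at position `i`. -/
def sub (G : List A) (i m : ℕ) : List A := (G.drop i).take m

lemma sub_length {G : List A} {i m : ℕ} (h : i + m ≤ G.length) :
    (sub G i m).length = m := by
  simp [sub]; omega

lemma mult_mem {G α : List A} {i m : ℕ} (hl : α.length = m)
    (h1 : i + m ≤ G.length) (h2 : sub G i m = α) :
    i ∈ (Finset.range (G.length + 1)).filter
      (fun i => i + α.length ≤ G.length ∧ (G.drop i).take α.length = α) := by
  subst hl
  exact Finset.mem_filter.mpr ⟨Finset.mem_range.mpr (by omega), h1, h2⟩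

lemma one_le_mult {G α : List A} {i m : ℕ} (hl : α.length = m)
    (h1 : i + m ≤ G.length) (h2 : sub G i m = α) :
    1 ≤ mult G α :=
  Finset.card_pos.mpr ⟨i, mult_mem hl h1 h2⟩

lemma eq_of_mult_le_one {G α : List A} {i j m : ℕ} (hl : α.length = m)
    (h : mult G α ≤ 1)
    (h1 : i + m ≤ G.length) (h2 : sub G i m = α)
    (h3 : j + m ≤ G.length) (h4 : sub G j m = α) :
    i = j :=
  Finset.card_le_one.mp h i (mult_mem hl h1 h2) j (mult_mem hl h3 h4)

lemma exists_occ {G α : List A} {m : ℕ} (hl : α.length = m) (h : 1 ≤ mult G α) :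
    ∃ p, p + m ≤ G.length ∧ sub G p m = α := by
  subst hl
  obtain ⟨p, hp⟩ := Finset.card_pos.mp h
  rw [Finset.mem_filter] at hp
  exact ⟨p, hp.2.1, hp.2.2⟩

lemma take_sub (G : List A) (i m l : ℕ) (h : l ≤ m) :
    (sub G i m).take l = sub G i l := by
  simp [sub, List.take_take, Nat.min_eq_left h]

lemma drop_one_sub (G : List A) (i m : ℕ) :
    (sub G i m).drop 1 = sub G (i + 1) (m - 1) := by
  simp [sub, List.drop_take, List.drop_drop]

end KUnivAux

open KUnivAux in
/-- If every string of length `k - 1` occurring in `G` is a hapax of `G`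
(which holds in particular when `k ≥ mrl(G) + 2`), then `G` is `k`-univocal:
any string with the same `k`-spectrum as `G` equals `G`. -/
theorem k_univocal_of_hapax_km1 {A : Type*} [Fintype A] [DecidableEq A]
    (G : List A) (k : ℕ) (hk : 2 ≤ k) (hkn : k ≤ G.length)
    (hhapax : ∀ α : List A, α.length = k - 1 → 1 ≤ mult G α → mult G α = 1) :
    ∀ G' : List A, (∀ α : List A, α.length = k → mult G' α = mult G α) →
      G' = G := by
  intro G' hspec
  classical
  -- uniqueness of (k-1)-substrings of G
  have hk1uniq : ∀ p q, p + (k - 1) ≤ G.length → q + (k - 1) ≤ G.length →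
      sub G p (k - 1) = sub G q (k - 1) → p = q := by
    intro p q hp hq he
    have hlen : (sub G p (k - 1)).length = k - 1 := sub_length hp
    have hm : mult G (sub G p (k - 1)) = 1 :=
      hhapax _ hlen (one_le_mult hlen hp rfl)
    exact eq_of_mult_le_one hlen hm.le hp rfl hq he.symm
  -- uniqueness of k-substrings of G
  have hkuniq : ∀ p q, p + k ≤ G.length → q + k ≤ G.length →
      sub G p k = sub G q k → p = q := by
    intro p q hp hq he
    apply hk1uniq p q (by omega) (by omega)
    have h := congrArg (List.take (k - 1)) he
    rwa [take_sub G p k (k - 1) (Nat.sub_le k 1),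
      take_sub G q k (k - 1) (Nat.sub_le k 1)] at h
  -- every string of length k has multiplicity at most 1 in G
  have hmultGk : ∀ α : List A, α.length = k → mult G α ≤ 1 := by
    intro α hα
    apply Finset.card_le_one.mpr
    intro a ha b hb
    rw [Finset.mem_filter, hα] at ha hb
    exact hkuniq a b ha.2.1 hb.2.1 (ha.2.2.trans hb.2.2.symm)
  -- each k-substring of G' occurs in G
  have exσ : ∀ i, i + k ≤ G'.length → ∃ p, p + k ≤ G.length ∧
      sub G p k = sub G' i k := by
    intro i hi
    have hlen : (sub G' i k).length = k := sub_length hi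
    have h1 : 1 ≤ mult G' (sub G' i k) := one_le_mult hlen hi rfl
    have h2 : 1 ≤ mult G (sub G' i k) := by rw [← hspec _ hlen]; exact h1
    exact exists_occ hlen h2
  -- each k-substring of G occurs in G'
  have exτ : ∀ i, i + k ≤ G.length → ∃ p, p + k ≤ G'.length ∧
      sub G' p k = sub G i k := by
    intro i hi
    have hlen : (sub G i k).length = k := sub_length hi
    have h1 : 1 ≤ mult G (sub G i k) := one_le_mult hlen hi rfl
    have h2 : 1 ≤ mult G' (sub G i k) := by rw [hspec _ hlen]; exact h1
    exact exists_occ hlen h2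
  have hk' : k ≤ G'.length := by
    obtain ⟨p, hp, -⟩ := exτ 0 (by omega)
    omega
  -- uniqueness of k-substrings of G'
  have hk'uniq : ∀ p q, p + k ≤ G'.length → q + k ≤ G'.length →
      sub G' p k = sub G' q k → p = q := by
    intro p q hp hq he
    have hlen : (sub G' p k).length = k := sub_length hp
    have h1 : mult G' (sub G' p k) ≤ 1 := by
      rw [hspec _ hlen]; exact hmultGk _ hlen
    exact eq_of_mult_le_one hlen h1 hp rfl hq he.symm
  choose σ hσ1 hσ2 using exσ
  choose τ hτ1 hτ2 using exτ
  -- lengths are equal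
  have hlen_eq : G'.length = G.length := by
    have c1 : (Finset.range (G'.length + 1 - k)).card ≤
        (Finset.range (G.length + 1 - k)).card := by
      apply Finset.card_le_card_of_injOn
        (fun i => if h : i + k ≤ G'.length then σ i h else 0)
      · intro i hi
        simp only [Finset.coe_range, Set.mem_Iio] at hi ⊢
        have h : i + k ≤ G'.length := by omega
        rw [dif_pos h]
        have := hσ1 i h
        omega
      · intro i hi j hj he
        simp only [Finset.coe_range, Set.mem_Iio] at hi hj
        have h1 : i + k ≤ G'.length := by omega
        have h2 : j + k ≤ G'.length := by omega
        simp only [dif_pos h1, dif_pos h2] at he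
        apply hk'uniq i j h1 h2
        rw [← hσ2 i h1, ← hσ2 j h2, he]
    have c2 : (Finset.range (G.length + 1 - k)).card ≤
        (Finset.range (G'.length + 1 - k)).card := by
      apply Finset.card_le_card_of_injOn
        (fun i => if h : i + k ≤ G.length then τ i h else 0)
      · intro i hi
        simp only [Finset.coe_range, Set.mem_Iio] at hi ⊢
        have h : i + k ≤ G.length := by omega
        rw [dif_pos h]
        have := hτ1 i h
        omega
      · intro i hi j hj he
        simp only [Finset.coe_range, Set.mem_Iio] at hi hj
        have h1 : i + k ≤ G.length := by omega
        have h2 : j + k ≤ G.length := by omega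
        simp only [dif_pos h1, dif_pos h2] at he
        apply hkuniq i j h1 h2
        rw [← hτ2 i h1, ← hτ2 j h2, he]
    rw [Finset.card_range, Finset.card_range] at c1 c2
    omega
  -- consecutive k-mers of G' map to consecutive positions in G
  have hstep : ∀ i (h : i + 1 + k ≤ G'.length) (h0 : i + k ≤ G'.length),
      σ (i + 1) h = σ i h0 + 1 := by
    intro i h h0
    have hb1 := hσ1 (i + 1) h
    have hb0 := hσ1 i h0
    apply hk1uniq _ _ (by omega) (by omega)
    have e1 : sub G (σ (i + 1) h) (k - 1) = sub G' (i + 1) (k - 1) := by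
      have h' := congrArg (List.take (k - 1)) (hσ2 (i + 1) h)
      rwa [take_sub _ _ _ _ (Nat.sub_le k 1),
        take_sub _ _ _ _ (Nat.sub_le k 1)] at h'
    have e2 : sub G (σ i h0 + 1) (k - 1) = sub G' (i + 1) (k - 1) := by
      have h' := congrArg (List.drop 1) (hσ2 i h0)
      rwa [drop_one_sub, drop_one_sub] at h'
    rw [e1, e2]
  have h00 : 0 + k ≤ G'.length := by omega
  have hlin : ∀ i (h : i + k ≤ G'.length), σ i h = σ 0 h00 + i := by
    intro i
    induction i with
    | zero => intro h; rfl
    | succ i ih =>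
      intro h
      have h0 : i + k ≤ G'.length := by omega
      rw [hstep i h h0, ih h0]; omega
  have hσ0 : σ 0 h00 = 0 := by
    have hlast : (G'.length - k) + k ≤ G'.length := by omega
    have e1 := hσ1 _ hlast
    have e2 := hlin _ hlast
    omega
  -- k-substrings agree positionwise
  have hsub : ∀ i, i + k ≤ G.length → sub G' i k = sub G i k := by
    intro i hi
    have hi' : i + k ≤ G'.length := by omega
    have h := hσ2 i hi'
    rw [hlin i hi', hσ0, Nat.zero_add] at h
    exact h.symm
  -- conclude
  have key : ∀ (L : List A) i m, m < k → i + k ≤ L.length →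
      (sub L i k)[m]? = L[i + m]? := by
    intro L i m hm h
    have h1 : m < (sub L i k).length := by rw [sub_length h]; exact hm
    have h2 : i + m < L.length := by omega
    rw [List.getElem?_eq_getElem h1, List.getElem?_eq_getElem h2]
    congr 1
    simp [sub, List.getElem_take, List.getElem_drop]
  apply List.ext_getElem?
  intro j
  by_cases hj : j < G.length
  · obtain ⟨i, m, rfl, hik, hmk⟩ : ∃ i m, j = i + m ∧ i + k ≤ G.length ∧ m < k :=
      ⟨min j (G.length - k), j - min j (G.length - k), by omega, by omega, by omega⟩
    rw [← key G' i m hmk (by omega), ← key G i m hmk hik, hsub i hik]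
  · rw [List.getElem?_eq_none (by omega), List.getElem?_eq_none (by omega)]
end
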